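/- For all reals c1, c2 > 0 there exists a constant C > 0, depending only on c1 and c2, such that the following holds. For every integer K ≥ 2, every real ε > 0, all reals Δ_1, …, Δ_K with Δ_1 = 0 and Δ_j ≥ Δ_min > 0 for every j ≥ 2, and every p : ℕ × {1,…,K} → [0,1] satisfying (i) ∑_{j=1}^{K} p(r, j) ≤ 1 for every r ∈ ℕ, and (ii) p(r, j) ≤ c1·exp(−2^{r+1}·Δ_j²/c2) for every r ∈ ℕ and every j ≥ 2 with Δ_j ≤ ε, one has ∑_{j ≥ 2, Δ_j ≤ ε} Δ_j · ∑_{r=1}^{∞} 2^{r−1}·p(r−1, j) ≤ C·(log K + 1)/Δ_min. -/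

import Mathlib

set_option maxHeartbeats 1000000


open scoped Classical

lemma aux_exp_sq {x : ℝ} (hx : 0 ≤ x) : x^2/4 ≤ Real.exp x := by
  have h : x/2 ≤ Real.exp (x/2) := by
    have := Real.add_one_le_exp (x/2); linarith
  have h2 : (x/2)^2 ≤ Real.exp (x/2)^2 := pow_le_pow_left₀ (by positivity) h 2
  calc x^2/4 = (x/2)^2 := by ring
    _ ≤ Real.exp (x/2)^2 := h2
    _ = Real.exp x := by rw [sq, ← Real.exp_add]; ring_nf

lemma aux_ye (y : ℝ) : y * Real.exp (-y) ≤ 1 := by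
  have h := Real.add_one_le_exp y
  have he : 0 < Real.exp (-y) := Real.exp_pos _
  have h2 : y * Real.exp (-y) ≤ Real.exp y * Real.exp (-y) :=
    mul_le_mul_of_nonneg_right (by linarith) he.le
  rwa [← Real.exp_add, add_neg_cancel, Real.exp_zero] at h2

lemma aux_summable {b : ℝ} (hb : 0 < b) :
    Summable (fun r : ℕ => (2:ℝ)^r * Real.exp (-(2^r * b))) := by
  apply Summable.of_nonneg_of_le (fun r => by positivity) (fun r => ?_)
    ((summable_geometric_of_lt_one (by norm_num) (by norm_num : (1/2:ℝ) < 1)).mul_left (4/b^2))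
  have hX : (0:ℝ) < 2^r * b := by positivity
  have h1 : (2^r*b)^2/4 ≤ Real.exp (2^r*b) := aux_exp_sq hX.le
  have h2 : Real.exp (-(2^r*b)) ≤ 4/(2^r*b)^2 := by
    rw [Real.exp_neg]
    have := inv_anti₀ (by positivity : (0:ℝ) < (2^r*b)^2/4) h1
    calc (Real.exp (2^r*b))⁻¹ ≤ ((2^r*b)^2/4)⁻¹ := this
      _ = 4/(2^r*b)^2 := by rw [inv_div]
  have h2r : ((2:ℝ)^r) ≠ 0 := by positivity
  calc (2:ℝ)^r * Real.exp (-(2^r*b)) ≤ 2^r * (4/(2^r*b)^2) :=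
        mul_le_mul_of_nonneg_left h2 (by positivity)
    _ = 4/b^2 * (1/2)^r := by rw [one_div, inv_pow]; field_simp

lemma aux_summable_min {M b : ℝ} (hM : 0 < M) (hb : 0 < b) :
    Summable (fun r : ℕ => (2:ℝ)^r * min 1 (M * Real.exp (-(2^r * b)))) := by
  apply Summable.of_nonneg_of_le
    (fun r => mul_nonneg (by positivity) (le_min zero_le_one (by positivity)))
    (fun r => ?_) ((aux_summable hb).mul_left M)
  calc (2:ℝ)^r * min 1 (M * Real.exp (-(2^r * b)))
      ≤ 2^r * (M * Real.exp (-(2^r * b))) :=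
        mul_le_mul_of_nonneg_left (min_le_right _ _) (by positivity)
    _ = M * (2^r * Real.exp (-(2^r * b))) := by ring

lemma key_sum_bound {M b : ℝ} (hM : 0 < M) (hb : 0 < b) :
    ∑' r : ℕ, (2:ℝ)^r * min 1 (M * Real.exp (-(2^r * b))) ≤
      (4 * max (Real.log M) 0 + 12) / b := by
  set L := max (Real.log M) 0 with hLdef
  have hL0 : 0 ≤ L := le_max_right _ _
  have hlogM : Real.log M ≤ L := le_max_left _ _
  set T := 2*L + 4 with hTdef
  have hT4 : (4:ℝ) ≤ T := by simp [hTdef]; linarith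
  have hT0 : (0:ℝ) < T := by linarith
  have hex : ∃ r : ℕ, T ≤ 2^r * b := by
    obtain ⟨n, hn⟩ := exists_nat_gt (T / b)
    refine ⟨n, ?_⟩
    have h2 : (n:ℝ) ≤ 2^n := by
      have := Nat.lt_two_pow_self (n := n)
      calc (n:ℝ) ≤ ((2^n : ℕ) : ℝ) := by exact_mod_cast this.le
        _ = 2^n := by push_cast; ring
    have h3 : T < (n:ℝ) * b := (div_lt_iff₀ hb).mp hn
    nlinarith
  have hf : Summable (fun r : ℕ => (2:ℝ)^r * min 1 (M * Real.exp (-(2^r * b)))) :=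
    aux_summable_min hM hb
  set R := Nat.find hex with hRdef
  have hRspec : T ≤ 2^R * b := Nat.find_spec hex
  rw [← hf.sum_add_tsum_nat_add R]
  have head : ∑ i ∈ Finset.range R, (2:ℝ)^i * min 1 (M * Real.exp (-(2^i * b))) ≤ 2*T/b := by
    have h1 : ∑ i ∈ Finset.range R, (2:ℝ)^i * min 1 (M * Real.exp (-(2^i * b)))
        ≤ ∑ i ∈ Finset.range R, (2:ℝ)^i := by
      apply Finset.sum_le_sum
      intro i _
      calc (2:ℝ)^i * min 1 (M * Real.exp (-(2^i * b)))
          ≤ 2^i * 1 := mul_le_mul_of_nonneg_left (min_le_left _ _) (by positivity)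
        _ = 2^i := mul_one _
    have h2 : ∑ i ∈ Finset.range R, (2:ℝ)^i = 2^R - 1 := by
      rw [geom_sum_eq (by norm_num : (2:ℝ) ≠ 1)]; norm_num
    rcases Nat.eq_zero_or_pos R with hR0 | hR1
    · rw [hR0]
      simp only [Finset.range_zero, Finset.sum_empty]
      positivity
    · have hmin : ¬ (T ≤ 2^(R-1) * b) := Nat.find_min hex (Nat.sub_lt hR1 one_pos)
      push_neg at hmin
      have hRe : (2:ℝ)^R = 2 * 2^(R-1) := by
        rw [← pow_succ']
        congr 1
        omega
      have h3 : (2:ℝ)^(R-1) ≤ T/b := (le_div_iff₀ hb).mpr hmin.le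
      calc ∑ i ∈ Finset.range R, (2:ℝ)^i * min 1 (M * Real.exp (-(2^i * b)))
          ≤ 2^R - 1 := h1.trans h2.le
        _ ≤ 2 * 2^(R-1) := by rw [← hRe]; linarith
        _ ≤ 2 * (T/b) := by linarith
        _ = 2*T/b := by ring
  have htail : ∑' m : ℕ, (2:ℝ)^(m+R) * min 1 (M * Real.exp (-(2^(m+R) * b))) ≤ 4/b := by
    have hpt : ∀ m : ℕ, (2:ℝ)^(m+R) * min 1 (M * Real.exp (-(2^(m+R) * b)))
        ≤ (4/b) * (Real.exp (-1) * Real.exp (-1) ^ m) := by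
      intro m
      set x := (2:ℝ)^(m+R) * b with hxdef
      have hx0 : 0 < x := by positivity
      have h2m : ((m:ℝ)+1) ≤ 2^m := by
        have := Nat.lt_two_pow_self (n := m)
        have h := Nat.succ_le_of_lt this
        calc ((m:ℝ)+1) = ((m+1 : ℕ) : ℝ) := by push_cast; ring
          _ ≤ ((2^m : ℕ) : ℝ) := by exact_mod_cast h
          _ = 2^m := by push_cast; ring
      have hxT : 2^m * T ≤ x := by
        rw [hxdef, pow_add, mul_assoc]
        exact mul_le_mul_of_nonneg_left hRspec (by positivity)
      have hx4m : 4*((m:ℝ)+1) ≤ x := by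
        calc 4*((m:ℝ)+1) ≤ 4 * 2^m := by linarith
          _ = 2^m * 4 := by ring
          _ ≤ 2^m * T := mul_le_mul_of_nonneg_left hT4 (by positivity)
          _ ≤ x := hxT
      have hTx : T ≤ x := by
        have h1 : (1:ℝ) ≤ 2^m := one_le_pow₀ (by norm_num : (1:ℝ) ≤ 2)
        nlinarith
      have hLx : L ≤ x/2 := by rw [hTdef] at hTx; linarith
      have step1 : min 1 (M * Real.exp (-(2^(m+R) * b))) ≤ Real.exp (-(x/2)) := by
        calc min 1 (M * Real.exp (-(2^(m+R) * b))) ≤ M * Real.exp (-x) := min_le_right _ _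
          _ = Real.exp (Real.log M + (-x)) := by rw [Real.exp_add, Real.exp_log hM]
          _ ≤ Real.exp (-(x/2)) := by apply Real.exp_le_exp.mpr; linarith
      have step2 : (2:ℝ)^(m+R) * min 1 (M * Real.exp (-(2^(m+R) * b)))
          ≤ (x/b) * Real.exp (-(x/2)) := by
        calc (2:ℝ)^(m+R) * min 1 (M * Real.exp (-(2^(m+R) * b)))
            ≤ (2:ℝ)^(m+R) * Real.exp (-(x/2)) :=
              mul_le_mul_of_nonneg_left step1 (by positivity)
          _ = (x/b) * Real.exp (-(x/2)) := by rw [hxdef]; field_simp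
      have step3 : (x/b) * Real.exp (-(x/2)) ≤ (4/b) * Real.exp (-(x/4)) := by
        have hy : (x/4) * Real.exp (-(x/4)) ≤ 1 := aux_ye (x/4)
        have hxe : x * Real.exp (-(x/2)) ≤ 4 * Real.exp (-(x/4)) := by
          have hee : Real.exp (-(x/2)) = Real.exp (-(x/4)) * Real.exp (-(x/4)) := by
            rw [← Real.exp_add]; ring_nf
          calc x * Real.exp (-(x/2)) = 4 * ((x/4) * Real.exp (-(x/4))) * Real.exp (-(x/4)) := by
                rw [hee]; ring
            _ ≤ 4 * 1 * Real.exp (-(x/4)) := by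
                apply mul_le_mul_of_nonneg_right _ (Real.exp_pos _).le
                apply mul_le_mul_of_nonneg_left hy (by norm_num)
            _ = 4 * Real.exp (-(x/4)) := by ring
        calc (x/b) * Real.exp (-(x/2)) = (x * Real.exp (-(x/2)))/b := by ring
          _ ≤ (4 * Real.exp (-(x/4)))/b := by gcongr
          _ = (4/b) * Real.exp (-(x/4)) := by ring
      have step4 : Real.exp (-(x/4)) ≤ Real.exp (-1) * Real.exp (-1) ^ m := by
        have he : Real.exp (-1) * Real.exp (-1:ℝ) ^ m = Real.exp (-((m:ℝ)+1)) := by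
          rw [← Real.exp_nat_mul, ← Real.exp_add]
          congr 1
          push_cast; ring
        rw [he]
        apply Real.exp_le_exp.mpr
        linarith
      calc (2:ℝ)^(m+R) * min 1 (M * Real.exp (-(2^(m+R) * b)))
          ≤ (x/b) * Real.exp (-(x/2)) := step2
        _ ≤ (4/b) * Real.exp (-(x/4)) := step3
        _ ≤ (4/b) * (Real.exp (-1) * Real.exp (-1) ^ m) :=
            mul_le_mul_of_nonneg_left step4 (by positivity)
    have hsum_shift : Summable (fun m : ℕ => (2:ℝ)^(m+R) * min 1 (M * Real.exp (-(2^(m+R) * b)))) := by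
      exact (summable_nat_add_iff R).mpr hf
    have he1 : Real.exp (-1:ℝ) < 1 := Real.exp_lt_one_iff.mpr (by norm_num)
    have hg : Summable (fun m : ℕ => (4/b) * (Real.exp (-1) * Real.exp (-1:ℝ) ^ m)) := by
      apply Summable.mul_left
      apply Summable.mul_left
      exact summable_geometric_of_lt_one (Real.exp_pos _).le he1
    have := Summable.tsum_le_tsum hpt hsum_shift hg
    refine this.trans ?_
    have hts : ∑' m : ℕ, (4/b) * (Real.exp (-1) * Real.exp (-1:ℝ) ^ m)
        = (4/b) * Real.exp (-1) * (1 - Real.exp (-1))⁻¹ := by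
      rw [tsum_mul_left, tsum_mul_left, tsum_geometric_of_lt_one (Real.exp_pos _).le he1]
      ring
    rw [hts]
    have h2e : (2:ℝ) ≤ Real.exp 1 := by
      have := Real.add_one_le_exp 1; linarith
    have hei : Real.exp (-1:ℝ) ≤ 1/2 := by
      rw [Real.exp_neg]
      rw [inv_le_comm₀ (Real.exp_pos _) (by norm_num)]
      linarith
    have hpos : (0:ℝ) < 1 - Real.exp (-1) := by linarith
    calc (4/b) * Real.exp (-1) * (1 - Real.exp (-1))⁻¹
        = (4/b) * (Real.exp (-1) / (1 - Real.exp (-1))) := by ring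
      _ ≤ (4/b) * 1 := by
          apply mul_le_mul_of_nonneg_left _ (by positivity)
          rw [div_le_one hpos]; linarith
      _ = 4/b := by ring
  calc _ ≤ 2*T/b + 4/b := add_le_add head htail
    _ = (4*L+12)/b := by rw [hTdef]; ring

/-- The abstract grouping argument bounding the regret contribution of actions with small gaps:
there is a constant `C` depending only on `c1, c2` such that if the selection probabilities
`p r j` sum to at most `1` over `j` and satisfy the Hoeffding-type tail bound
`p r j ≤ c1 * exp(-2^(r+1) * (Δ j)^2 / c2)` for suboptimal actions with gap at most `ε`, then
the regret contribution of those actions is at most `C * (log K + 1) / Δmin`. -/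
theorem regret_small_gaps_le (c1 c2 : ℝ) (hc1 : 0 < c1) (hc2 : 0 < c2) :
    ∃ C : ℝ, 0 < C ∧
      ∀ (K : ℕ) (hK : 2 ≤ K) (ε : ℝ), 0 < ε →
        ∀ (Δ : Fin K → ℝ) (Δmin : ℝ), 0 < Δmin →
          Δ ⟨0, by omega⟩ = 0 →
          (∀ j : Fin K, 1 ≤ (j : ℕ) → Δmin ≤ Δ j) →
          ∀ p : ℕ → Fin K → ℝ,
            (∀ r j, p r j ∈ Set.Icc (0 : ℝ) 1) →
            (∀ r : ℕ, ∑ j, p r j ≤ 1) →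
            (∀ (r : ℕ) (j : Fin K), 1 ≤ (j : ℕ) → Δ j ≤ ε →
              p r j ≤ c1 * Real.exp (-(2 : ℝ) ^ (r + 1) * Δ j ^ 2 / c2)) →
            ∑ j ∈ Finset.univ.filter (fun j : Fin K => 1 ≤ (j : ℕ) ∧ Δ j ≤ ε),
                Δ j * ∑' r : ℕ, (2 : ℝ) ^ r * p r j ≤
              C * (Real.log K + 1) / Δmin := by
  refine ⟨8*c2*(max (Real.log c1) 0 + 4), by positivity, ?_⟩
  intro K hK ε hε Δ Δmin hΔmin h0 hgap p hp01 hpsum hptail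
  have hK0 : (0:ℝ) < K := by positivity
  have hK1 : (1:ℝ) ≤ K := by exact_mod_cast Nat.one_le_of_lt hK
  have hlogK : 0 ≤ Real.log K := Real.log_nonneg hK1
  set A := max (Real.log c1) 0 with hAdef
  have hA0 : 0 ≤ A := le_max_right _ _
  set L := max (Real.log ((K:ℝ)*c1)) 0 with hLdef
  have hL0 : 0 ≤ L := le_max_right _ _
  have hLle : L ≤ Real.log K + A := by
    apply max_le
    · rw [Real.log_mul (ne_of_gt hK0) (ne_of_gt hc1)]
      have : Real.log c1 ≤ A := le_max_left _ _
      linarith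
    · linarith
  set J := Finset.univ.filter (fun j : Fin K => 1 ≤ (j : ℕ) ∧ Δ j ≤ ε) with hJdef
  have hJΔ : ∀ j ∈ J, Δmin ≤ Δ j := by
    intro j hj
    rw [hJdef, Finset.mem_filter] at hj
    exact hgap j hj.2.1
  have hJε : ∀ j ∈ J, Δ j ≤ ε := by
    intro j hj
    rw [hJdef, Finset.mem_filter] at hj
    exact hj.2.2
  have hJtail : ∀ j ∈ J, ∀ r : ℕ,
      p r j ≤ c1 * Real.exp (-(2 : ℝ) ^ (r + 1) * Δ j ^ 2 / c2) := by
    intro j hj r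
    rw [hJdef, Finset.mem_filter] at hj
    exact hptail r j hj.2.1 hj.2.2
  set ℓ : Fin K → ℕ := fun j => Nat.log 2 ⌊Δ j / Δmin⌋₊ with hℓdef
  have hbucket : ∀ j ∈ J, Δmin * 2^(ℓ j) ≤ Δ j ∧ Δ j < Δmin * 2^(ℓ j + 1) := by
    intro j hj
    have hx1 : (1:ℝ) ≤ Δ j / Δmin := (one_le_div hΔmin).mpr (hJΔ j hj)
    have hx0 : (0:ℝ) ≤ Δ j / Δmin := by linarith
    have hn1 : 1 ≤ ⌊Δ j / Δmin⌋₊ := Nat.le_floor (by exact_mod_cast hx1)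
    have hmulx : Δmin * (Δ j / Δmin) = Δ j := by field_simp
    constructor
    · have hlow : ((2^(ℓ j) : ℕ) : ℝ) ≤ Δ j / Δmin := by
        calc ((2^(ℓ j) : ℕ) : ℝ) ≤ (⌊Δ j / Δmin⌋₊ : ℝ) := by
              exact_mod_cast Nat.pow_log_le_self 2 (by omega)
          _ ≤ Δ j / Δmin := Nat.floor_le hx0
      have : Δmin * ((2^(ℓ j) : ℕ) : ℝ) ≤ Δmin * (Δ j / Δmin) :=
        mul_le_mul_of_nonneg_left hlow hΔmin.le
      rw [hmulx] at this
      calc Δmin * (2:ℝ)^(ℓ j) = Δmin * ((2^(ℓ j) : ℕ) : ℝ) := by push_cast; ring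
        _ ≤ Δ j := this
    · have hup : Δ j / Δmin < ((2^(ℓ j + 1) : ℕ) : ℝ) := by
        calc Δ j / Δmin < (⌊Δ j / Δmin⌋₊ : ℝ) + 1 := Nat.lt_floor_add_one _
          _ ≤ ((2^(ℓ j + 1) : ℕ) : ℝ) := by
              have := Nat.lt_pow_succ_log_self (by norm_num : 1 < 2) ⌊Δ j / Δmin⌋₊
              exact_mod_cast Nat.succ_le_of_lt this
      have : Δmin * (Δ j / Δmin) < Δmin * ((2^(ℓ j + 1) : ℕ) : ℝ) :=
        (mul_lt_mul_iff_right₀ hΔmin).mpr hup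
      rw [hmulx] at this
      calc Δ j < Δmin * ((2^(ℓ j + 1) : ℕ) : ℝ) := this
        _ = Δmin * (2:ℝ)^(ℓ j + 1) := by push_cast; ring
  set Lm := Nat.log 2 ⌊ε / Δmin⌋₊ with hLmdef
  have hmaps : ∀ j ∈ J, ℓ j ∈ Finset.range (Lm + 1) := by
    intro j hj
    rw [Finset.mem_range]
    apply Nat.lt_succ_of_le
    apply Nat.log_mono_right
    apply Nat.floor_le_floor
    exact (div_le_div_iff_of_pos_right hΔmin).mpr (hJε j hj)
  rw [← Finset.sum_fiberwise_of_maps_to hmaps (fun j => Δ j * ∑' r : ℕ, (2:ℝ)^r * p r j)]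
  have hbb : ∀ l ∈ Finset.range (Lm + 1),
      ∑ j ∈ J.filter (fun j => ℓ j = l), Δ j * ∑' r : ℕ, (2:ℝ)^r * p r j
        ≤ (4*L+12)*c2*(1/2:ℝ)^l/Δmin := by
    intro l _
    set B := J.filter (fun j => ℓ j = l) with hBdef
    set b := 2*(Δmin*2^l)^2/c2 with hbdef
    have hb : 0 < b := by rw [hbdef]; positivity
    have hBl : ∀ j ∈ B, Δmin * 2^l ≤ Δ j ∧ Δ j ≤ Δmin * 2^(l+1) := by
      intro j hj
      rw [hBdef, Finset.mem_filter] at hj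
      obtain ⟨hjJ, hjl⟩ := hj
      obtain ⟨hl1, hl2⟩ := hbucket j hjJ
      rw [hjl] at hl1 hl2
      exact ⟨hl1, hl2.le⟩
    have hBJ : ∀ j ∈ B, j ∈ J := by
      intro j hj; rw [hBdef, Finset.mem_filter] at hj; exact hj.1
    have hpb : ∀ j ∈ B, ∀ r : ℕ, p r j ≤ c1 * Real.exp (-(2^r * b)) := by
      intro j hj r
      have h1 : (Δmin*2^l)^2 ≤ Δ j ^ 2 := by
        apply pow_le_pow_left₀ (by positivity) (hBl j hj).1
      have hkey : (2:ℝ)^r * b ≤ 2^(r+1) * Δ j ^ 2 / c2 := by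
        have e1 : (2:ℝ)^r * b = (2^r * 2 * (Δmin*2^l)^2)/c2 := by rw [hbdef]; ring
        have e2 : (2:ℝ)^(r+1) * Δ j ^ 2 / c2 = (2^r * 2 * Δ j ^ 2)/c2 := by
          ring
        rw [e1, e2]
        gcongr
      calc p r j ≤ c1 * Real.exp (-(2 : ℝ) ^ (r + 1) * Δ j ^ 2 / c2) := hJtail j (hBJ j hj) r
        _ ≤ c1 * Real.exp (-(2^r * b)) := by
            apply mul_le_mul_of_nonneg_left _ hc1.le
            apply Real.exp_le_exp.mpr
            have : -(2 : ℝ) ^ (r + 1) * Δ j ^ 2 / c2 = -((2:ℝ)^(r+1) * Δ j ^ 2 / c2) := by ring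
            rw [this]
            linarith
    have hsum_j : ∀ j ∈ B, Summable (fun r : ℕ => (2:ℝ)^r * p r j) := by
      intro j hj
      apply Summable.of_nonneg_of_le
        (fun r => mul_nonneg (by positivity) (hp01 r j).1)
        (fun r => ?_) ((aux_summable hb).mul_left c1)
      calc (2:ℝ)^r * p r j ≤ 2^r * (c1 * Real.exp (-(2^r * b))) :=
            mul_le_mul_of_nonneg_left (hpb j hj r) (by positivity)
        _ = c1 * (2^r * Real.exp (-(2^r * b))) := by ring
    have hTnn : ∀ j ∈ B, 0 ≤ ∑' r : ℕ, (2:ℝ)^r * p r j := by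
      intro j hj
      exact tsum_nonneg (fun r => mul_nonneg (by positivity) (hp01 r j).1)
    have hM : (0:ℝ) < (K:ℝ) * c1 := by positivity
    have hpt : ∀ r : ℕ, ∑ j ∈ B, (2:ℝ)^r * p r j
        ≤ 2^r * min 1 ((K:ℝ) * c1 * Real.exp (-(2^r * b))) := by
      intro r
      rw [← Finset.mul_sum]
      apply mul_le_mul_of_nonneg_left _ (by positivity : (0:ℝ) ≤ 2^r)
      apply le_min
      · calc ∑ j ∈ B, p r j ≤ ∑ j, p r j := by
              apply Finset.sum_le_sum_of_subset_of_nonneg (Finset.subset_univ B)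
              intro j _ _
              exact (hp01 r j).1
          _ ≤ 1 := hpsum r
      · calc ∑ j ∈ B, p r j ≤ ∑ _j ∈ B, c1 * Real.exp (-(2^r * b)) :=
              Finset.sum_le_sum (fun j hj => hpb j hj r)
          _ = (B.card : ℝ) * (c1 * Real.exp (-(2^r * b))) := by
              rw [Finset.sum_const, nsmul_eq_mul]
          _ ≤ (K:ℝ) * (c1 * Real.exp (-(2^r * b))) := by
              apply mul_le_mul_of_nonneg_right _ (by positivity)
              have : B.card ≤ K := by
                calc B.card ≤ Fintype.card (Fin K) := Finset.card_le_univ B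
                  _ = K := Fintype.card_fin K
              exact_mod_cast this
          _ = (K:ℝ) * c1 * Real.exp (-(2^r * b)) := by ring
    have hsumB : Summable (fun r : ℕ => ∑ j ∈ B, (2:ℝ)^r * p r j) :=
      summable_sum (fun j hj => hsum_j j hj)
    calc ∑ j ∈ B, Δ j * ∑' r : ℕ, (2:ℝ)^r * p r j
        ≤ ∑ j ∈ B, (Δmin * 2^(l+1)) * ∑' r : ℕ, (2:ℝ)^r * p r j := by
          apply Finset.sum_le_sum
          intro j hj
          exact mul_le_mul_of_nonneg_right (hBl j hj).2 (hTnn j hj)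
      _ = (Δmin * 2^(l+1)) * ∑ j ∈ B, ∑' r : ℕ, (2:ℝ)^r * p r j := by
          rw [Finset.mul_sum]
      _ = (Δmin * 2^(l+1)) * ∑' r : ℕ, ∑ j ∈ B, (2:ℝ)^r * p r j := by
          rw [Summable.tsum_finsetSum (fun j hj => hsum_j j hj)]
      _ ≤ (Δmin * 2^(l+1)) * ∑' r : ℕ, (2:ℝ)^r * min 1 ((K:ℝ) * c1 * Real.exp (-(2^r * b))) := by
          apply mul_le_mul_of_nonneg_left _ (by positivity)
          exact Summable.tsum_le_tsum hpt hsumB (aux_summable_min hM hb)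
      _ ≤ (Δmin * 2^(l+1)) * ((4 * max (Real.log ((K:ℝ)*c1)) 0 + 12) / b) := by
          apply mul_le_mul_of_nonneg_left (key_sum_bound hM hb) (by positivity)
      _ = (4*L+12)*c2*(1/2:ℝ)^l/Δmin := by
          rw [hbdef, ← hLdef, one_div, inv_pow]
          have h2l : ((2:ℝ)^l) ≠ 0 := by positivity
          field_simp
          ring
  calc ∑ l ∈ Finset.range (Lm+1), ∑ j ∈ J.filter (fun j => ℓ j = l),
        Δ j * ∑' r : ℕ, (2:ℝ)^r * p r j
      ≤ ∑ l ∈ Finset.range (Lm+1), (4*L+12)*c2*(1/2:ℝ)^l/Δmin := Finset.sum_le_sum hbb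
    _ = (4*L+12)*c2/Δmin * ∑ l ∈ Finset.range (Lm+1), (1/2:ℝ)^l := by
        rw [Finset.mul_sum]
        apply Finset.sum_congr rfl
        intro l _
        ring
    _ ≤ (4*L+12)*c2/Δmin * 2 := by
        apply mul_le_mul_of_nonneg_left (sum_geometric_two_le _) (by positivity)
    _ ≤ 8*c2*(A + 4) * (Real.log K + 1) / Δmin := by
        rw [div_mul_eq_mul_div]
        gcongr ?_ / Δmin
        nlinarith [mul_le_mul_of_nonneg_left hLle (by positivity : (0:ℝ) ≤ 8*c2),
          mul_nonneg (mul_nonneg (by positivity : (0:ℝ) ≤ 8*c2) hA0) hlogK]
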